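/- The analytic metric identities hold: let x : ℝ³ → ℝ³ be twice continuously differentiable and define the metric terms J𝐚^i = (∂x/∂ξ^j) × (∂x/∂ξ^k) for each cyclic permutation (i, j, k) of (1, 2, 3). Then for each fixed component index n ∈ {1, 2, 3}, the divergence ∑_{i=1}^{3} ∂/∂ξ^i (J𝐚^i · ê_n) vanishes identically. -/

import Mathlib

/-- Partial derivative of `f : ℝ³ → ℝ` in direction `d`. -/
noncomputable def pd3 (d : Fin 3) (f : (Fin 3 → ℝ) → ℝ) (y : Fin 3 → ℝ) : ℝ :=
  deriv (fun s => f (Function.update y d s)) (y d)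

/-- Metric terms of a mapping `x : ℝ³ → ℝ³`: `J𝐚ⁱ = (∂x/∂ξʲ) × (∂x/∂ξᵏ)` with
`(i, j, k)` cyclic, i.e. `j = i + 1`, `k = i + 2` in `Fin 3`. -/
noncomputable def metricTerm (x : (Fin 3 → ℝ) → (Fin 3 → ℝ)) (i : Fin 3)
    (y : Fin 3 → ℝ) : Fin 3 → ℝ :=
  crossProduct (fun a => pd3 (i + 1) (fun z => x z a) y)
    (fun a => pd3 (i + 2) (fun z => x z a) y)

lemma pd3_hasDerivAt {g : (Fin 3 → ℝ) → ℝ} {y : Fin 3 → ℝ} (d : Fin 3)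
    (hg : DifferentiableAt ℝ g y) :
    HasDerivAt (fun s => g (Function.update y d s))
      (fderiv ℝ g y (Pi.single d 1)) (y d) := by
  have h := HasFDerivAt.comp_hasDerivAt_of_eq (l := g) (f := Function.update y d)
    (x := y d) hg.hasFDerivAt (hasDerivAt_update y d (y d))
    (by rw [Function.update_eq_self])
  exact h

lemma pd3_eq_fderiv {g : (Fin 3 → ℝ) → ℝ} {y : Fin 3 → ℝ} (d : Fin 3)
    (hg : DifferentiableAt ℝ g y) :
    pd3 d g y = fderiv ℝ g y (Pi.single d 1) :=
  (pd3_hasDerivAt d hg).deriv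

lemma pd3_fun_eq {g : (Fin 3 → ℝ) → ℝ} (hg : Differentiable ℝ g) (j : Fin 3) :
    (fun z => pd3 j g z) = fun z => fderiv ℝ g z (Pi.single j 1) :=
  funext fun z => pd3_eq_fderiv j (hg z)

lemma fderiv_contDiff_one {g : (Fin 3 → ℝ) → ℝ} (hg : ContDiff ℝ 2 g) :
    ContDiff ℝ 1 (fderiv ℝ g) :=
  hg.fderiv_right (by norm_num)

lemma pd3_differentiable {g : (Fin 3 → ℝ) → ℝ} (hg : ContDiff ℝ 2 g) (j : Fin 3) :
    Differentiable ℝ (fun z => pd3 j g z) := by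
  rw [pd3_fun_eq (hg.differentiable two_ne_zero) j]
  exact (ContinuousLinearMap.apply ℝ ℝ (Pi.single j 1)).differentiable.comp
    ((fderiv_contDiff_one hg).differentiable one_ne_zero)

lemma pd3_pd3 {g : (Fin 3 → ℝ) → ℝ} (hg : ContDiff ℝ 2 g) (i j : Fin 3) (y : Fin 3 → ℝ) :
    pd3 i (fun z => pd3 j g z) y
      = fderiv ℝ (fderiv ℝ g) y (Pi.single i 1) (Pi.single j 1) := by
  have hgd : Differentiable ℝ g := hg.differentiable two_ne_zero
  have hd : DifferentiableAt ℝ (fderiv ℝ g) y :=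
    ((fderiv_contDiff_one hg).differentiable one_ne_zero) y
  have hc : HasFDerivAt (fun z => fderiv ℝ g z (Pi.single j (1:ℝ)))
      ((ContinuousLinearMap.apply ℝ ℝ (Pi.single j 1)).comp (fderiv ℝ (fderiv ℝ g) y)) y := by
    have h0 := (ContinuousLinearMap.apply ℝ ℝ (Pi.single j (1:ℝ))).hasFDerivAt.comp y
      hd.hasFDerivAt
    simpa [Function.comp_def] using h0
  rw [pd3_fun_eq hgd j, pd3_eq_fderiv i hc.differentiableAt, hc.fderiv]
  rfl

lemma pd3_pd3_symm {g : (Fin 3 → ℝ) → ℝ} (hg : ContDiff ℝ 2 g) (i j : Fin 3) (y : Fin 3 → ℝ) :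
    pd3 i (fun z => pd3 j g z) y = pd3 j (fun z => pd3 i g z) y := by
  have hd : DifferentiableAt ℝ (fderiv ℝ g) y :=
    ((fderiv_contDiff_one hg).differentiable one_ne_zero) y
  rw [pd3_pd3 hg, pd3_pd3 hg]
  exact second_derivative_symmetric
    (fun z => ((hg.differentiable two_ne_zero) z).hasFDerivAt) hd.hasFDerivAt _ _

lemma pd3_comb {p q r s : (Fin 3 → ℝ) → ℝ} {y : Fin 3 → ℝ} (d : Fin 3)
    (hp : DifferentiableAt ℝ p y) (hq : DifferentiableAt ℝ q y)
    (hr : DifferentiableAt ℝ r y) (hs : DifferentiableAt ℝ s y) :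
    pd3 d (fun z => p z * q z - r z * s z) y
      = (pd3 d p y * q y + p y * pd3 d q y) - (pd3 d r y * s y + r y * pd3 d s y) := by
  have H := ((pd3_hasDerivAt d hp).mul (pd3_hasDerivAt d hq)).sub
      ((pd3_hasDerivAt d hr).mul (pd3_hasDerivAt d hs))
  simp only [Function.update_eq_self] at H
  rw [pd3_eq_fderiv d hp, pd3_eq_fderiv d hq, pd3_eq_fderiv d hr, pd3_eq_fderiv d hs]
  exact H.deriv

lemma cross_nth (u v : Fin 3 → ℝ) (n : Fin 3) :
    crossProduct u v n = u (n+1) * v (n+2) - u (n+2) * v (n+1) := by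
  fin_cases n <;> simp [cross_apply]

lemma key (g h : (Fin 3 → ℝ) → ℝ) (hg : ContDiff ℝ 2 g) (hh : ContDiff ℝ 2 h)
    (y : Fin 3 → ℝ) :
    ∑ i : Fin 3, pd3 i
      (fun z => pd3 (i+1) g z * pd3 (i+2) h z - pd3 (i+1) h z * pd3 (i+2) g z) y = 0 := by
  have hG : ∀ j : Fin 3, Differentiable ℝ (fun z => pd3 j g z) := pd3_differentiable hg
  have hH : ∀ j : Fin 3, Differentiable ℝ (fun z => pd3 j h z) := pd3_differentiable hh
  rw [Fin.sum_univ_three]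
  rw [pd3_comb 0 ((hG _) y) ((hH _) y) ((hH _) y) ((hG _) y),
      pd3_comb 1 ((hG _) y) ((hH _) y) ((hH _) y) ((hG _) y),
      pd3_comb 2 ((hG _) y) ((hH _) y) ((hH _) y) ((hG _) y)]
  have e01 : (0:Fin 3)+1 = 1 := rfl
  have e02 : (0:Fin 3)+2 = 2 := rfl
  have e11 : (1:Fin 3)+1 = 2 := rfl
  have e12 : (1:Fin 3)+2 = 0 := rfl
  have e21 : (2:Fin 3)+1 = 0 := rfl
  have e22 : (2:Fin 3)+2 = 1 := rfl
  simp only [e01, e02, e11, e12, e21, e22]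
  rw [pd3_pd3_symm hg 1 0 y, pd3_pd3_symm hg 2 0 y, pd3_pd3_symm hg 2 1 y,
      pd3_pd3_symm hh 1 0 y, pd3_pd3_symm hh 2 0 y, pd3_pd3_symm hh 2 1 y]
  ring

/-- The analytic metric identities: for `x : ℝ³ → ℝ³` twice continuously
differentiable, and each fixed component index `n`, the divergence
`∑ᵢ ∂/∂ξⁱ (J𝐚ⁱ ⋅ êₙ)` vanishes identically. -/
theorem metric_identities (x : (Fin 3 → ℝ) → (Fin 3 → ℝ)) (hx : ContDiff ℝ 2 x) :
    ∀ n : Fin 3, ∀ y : Fin 3 → ℝ,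
      (∑ i : Fin 3, pd3 i (fun z => metricTerm x i z n) y) = 0 := by
  intro n y
  have hcomp : ∀ a : Fin 3, ContDiff ℝ 2 (fun z => x z a) := fun a =>
    (ContinuousLinearMap.proj (R := ℝ) (φ := fun _ : Fin 3 => ℝ) a).contDiff.comp hx
  simp only [metricTerm, cross_nth]
  exact key (fun w => x w (n+1)) (fun w => x w (n+2)) (hcomp _) (hcomp _) y
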